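/- Let Γ be a free abelian group of rank 2 with fixed surjection π : Γ → Z, and extend the Γ-action to the set Γ̆ = Γ ∪ Z by γ ∘ (m,−∞) = (π(γ)+m, −∞). Fix γ ∈ Γ. For every β ∈ Γ̆ there exists a unique minimal element β^{⊥(γ)} ∈ Γ̆ among all φ ∈ Γ̆ satisfying φ ∘ β ∘ γ > 0 (with respect to the natural linear order on Γ̆), and the map β ↦ β^{⊥(γ)} is an involution of Γ̆ preserving the subset Γ. -/

import Mathlib

variable {Γ : Type*} [AddCommGroup Γ]

/-- The extended projection `π̆ : Γ̆ = Γ ⊔ ℤ → ℤ`: equal to `π` on `Γ` and to the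
identity on the second copy of `ℤ` (the elements `(n, −∞)`). -/
def breveProj (π : Γ →+ ℤ) : Γ ⊕ ℤ → ℤ := Sum.elim π id

/-- The natural strict order on `Γ̆ = Γ ⊔ ℤ`: first compare via `π̆`; inside a fiber,
`(n, −∞)` is smaller than every `(n, p)`, and the fiber `π⁻¹(n)` is ordered by its
`ℤ`-torsor structure (via the inclusion `ι : ℤ → Γ` of the kernel of `π`). -/
def breveLT (ι : ℤ →+ Γ) (π : Γ →+ ℤ) (x y : Γ ⊕ ℤ) : Prop :=
  breveProj π x < breveProj π y ∨
    (breveProj π x = breveProj π y ∧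
      match x, y with
      | Sum.inr _, Sum.inl _ => True
      | Sum.inl a, Sum.inl b => ∃ k : ℤ, 0 < k ∧ ι k = b - a
      | _, _ => False)

/-- The commutative operation `∘` on `Γ̆ = Γ ⊔ ℤ` extending the addition of `Γ` and
the `Γ`-action, with `(n,p) ∘ (m,−∞) = (n+m,−∞)`. -/
def breveCirc (π : Γ →+ ℤ) : Γ ⊕ ℤ → Γ ⊕ ℤ → Γ ⊕ ℤ
  | Sum.inl a, Sum.inl b => Sum.inl (a + b)
  | Sum.inl a, Sum.inr m => Sum.inr (π a + m)
  | Sum.inr n, Sum.inl b => Sum.inr (n + π b)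
  | Sum.inr n, Sum.inr m => Sum.inr (n + m)

/-- `φ = β^{⊥(γ)}`: `φ` is the minimum of the set `{ψ ∈ Γ̆ : ψ ∘ β ∘ γ > 0}`. -/
def IsPerp (ι : ℤ →+ Γ) (π : Γ →+ ℤ) (γ : Γ) (β φ : Γ ⊕ ℤ) : Prop :=
  breveLT ι π (Sum.inl (0 : Γ)) (breveCirc π φ (breveCirc π β (Sum.inl γ))) ∧
    ∀ ψ : Γ ⊕ ℤ,
      breveLT ι π (Sum.inl (0 : Γ)) (breveCirc π ψ (breveCirc π β (Sum.inl γ))) →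
        φ = ψ ∨ breveLT ι π φ ψ

lemma breveLT_asymm (ι : ℤ →+ Γ) (π : Γ →+ ℤ) (hι : Function.Injective ι)
    {x y : Γ ⊕ ℤ} (h : breveLT ι π x y) (h' : breveLT ι π y x) : False := by
  cases x with
  | inl a =>
    cases y with
    | inl b =>
      simp only [breveLT, breveProj, Sum.elim_inl] at h h'
      rcases h with h | ⟨he, k, hk, hk2⟩
      · rcases h' with h' | ⟨he', _⟩ <;> omega
      · rcases h' with h' | ⟨he', k', hk', hk2'⟩
        · omega
        · have : ι (k + k') = ι 0 := by rw [map_add, hk2, hk2', map_zero]; abel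
          have := hι this
          omega
    | inr n =>
      simp only [breveLT, breveProj, Sum.elim_inl, Sum.elim_inr] at h h'
      rcases h with h | ⟨he, h⟩
      · rcases h' with h' | ⟨he', _⟩ <;> omega
      · exact h
  | inr n =>
    cases y with
    | inl b =>
      simp only [breveLT, breveProj, Sum.elim_inl, Sum.elim_inr] at h h'
      rcases h' with h' | ⟨he', h'⟩
      · rcases h with h | ⟨he, _⟩ <;> omega
      · exact h'
    | inr m =>
      simp only [breveLT, breveProj, Sum.elim_inr] at h h'
      rcases h with h | ⟨he, h⟩
      · rcases h' with h' | ⟨he', _⟩ <;> omega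
      · exact h

lemma perp_isPerp (ι : ℤ →+ Γ) (π : Γ →+ ℤ) (hι : Function.Injective ι)
    (hexact : ∀ a : Γ, π a = 0 ↔ ∃ k : ℤ, ι k = a) (γ : Γ) (β : Γ ⊕ ℤ) :
    IsPerp ι π γ β
      (match β with
       | Sum.inl b => Sum.inl (ι 1 - b - γ)
       | Sum.inr m => Sum.inr (1 - m - π γ)) := by
  have hπι : ∀ k : ℤ, π (ι k) = 0 := fun k => (hexact (ι k)).2 ⟨k, rfl⟩
  cases β with
  | inl b =>
    constructor
    · simp only [breveCirc]
      right
      constructor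
      · simp [breveProj, map_add, map_sub, hπι]
      · exact ⟨1, one_pos, by abel⟩
    · intro ψ hψ
      cases ψ with
      | inl a =>
        simp only [breveCirc, breveLT, breveProj, Sum.elim_inl, map_zero, map_add,
          map_sub] at hψ ⊢
        rcases hψ with h | ⟨he, k, hk, hk2⟩
        · right; left; simp [hπι]; linarith
        · rw [sub_zero] at hk2
          rcases eq_or_lt_of_le (by omega : (0:ℤ) + 1 ≤ k) with h1 | h1
          · left
            have hk1 : k = 1 := by omega
            rw [hk1] at hk2
            have : a = ι 1 - b - γ := by rw [hk2]; abel
            rw [this]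
          · right; right
            constructor
            · simp [hπι]; omega
            · refine ⟨k - 1, by omega, ?_⟩
              rw [map_sub, hk2]
              abel
      | inr n =>
        simp only [breveCirc, breveLT, breveProj, Sum.elim_inl, Sum.elim_inr, id_eq,
          map_zero, map_add] at hψ ⊢
        rcases hψ with h | ⟨_, h⟩
        · right; left; simp [hπι, map_sub]; omega
        · exact absurd h (by simp)
  | inr m =>
    constructor
    · simp only [breveCirc]
      left
      simp [breveProj]
    · intro ψ hψ
      cases ψ with
      | inl a =>
        simp only [breveCirc, breveLT, breveProj, Sum.elim_inl, Sum.elim_inr, id_eq,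
          map_zero, map_add] at hψ ⊢
        rcases hψ with h | ⟨_, h⟩
        · right
          rcases eq_or_lt_of_le (by omega : 1 - m - π γ ≤ π a) with h1 | h1
          · right; exact ⟨h1.symm ▸ rfl, trivial⟩
          · left; omega
        · exact absurd h (by simp)
      | inr n =>
        simp only [breveCirc, breveLT, breveProj, Sum.elim_inl, Sum.elim_inr, id_eq,
          map_zero] at hψ ⊢
        rcases hψ with h | ⟨_, h⟩
        · rcases eq_or_lt_of_le (by omega : 1 - m - π γ ≤ n) with h1 | h1
          · left; rw [h1]
          · right; left; omega
        · exact absurd h (by simp)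

theorem exists_perp_involution (ι : ℤ →+ Γ) (π : Γ →+ ℤ)
    (hι : Function.Injective ι) (hπ : Function.Surjective π)
    (hexact : ∀ a : Γ, π a = 0 ↔ ∃ k : ℤ, ι k = a) (γ : Γ) :
    (∀ β : Γ ⊕ ℤ, ∃! φ : Γ ⊕ ℤ, IsPerp ι π γ β φ) ∧
      ∃ perp : Γ ⊕ ℤ → Γ ⊕ ℤ,
        (∀ β : Γ ⊕ ℤ, IsPerp ι π γ β (perp β)) ∧
        (∀ β : Γ ⊕ ℤ, perp (perp β) = β) ∧
        (∀ a : Γ, ∃ a' : Γ, perp (Sum.inl a) = Sum.inl a') := by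
  set perp : Γ ⊕ ℤ → Γ ⊕ ℤ := fun β =>
    match β with
    | Sum.inl b => Sum.inl (ι 1 - b - γ)
    | Sum.inr m => Sum.inr (1 - m - π γ) with hperp
  have hIsPerp : ∀ β, IsPerp ι π γ β (perp β) := fun β =>
    perp_isPerp ι π hι hexact γ β
  refine ⟨fun β => ⟨perp β, hIsPerp β, fun ψ hψ => ?_⟩, perp, hIsPerp, ?_, ?_⟩
  · rcases hψ.2 (perp β) (hIsPerp β).1 with h | h
    · exact h
    · rcases (hIsPerp β).2 ψ hψ.1 with h' | h'
      · exact h'.symm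
      · exact absurd h (fun h => breveLT_asymm ι π hι h h')
  · intro β
    cases β with
    | inl b => simp only [hperp]; congr 1; abel
    | inr m => simp only [hperp]; congr 1; ring
  · intro a; exact ⟨ι 1 - a - γ, rfl⟩
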